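/- Ccbs satisfies Independence restricted to adding isolated arguments: if AF' is obtained from AF = (A,R) by adding a new argument c with no attacks involving c, then for all a, b ∈ A, a ⪰ b under Ccbs in AF if and only if a ⪰ b under Ccbs in AF'. -/

import Mathlib

/-- A possible world: a truth assignment over the atoms/arguments. -/
abbrev World (A : Type) := A → Bool

/-- A conditional (φ|ψ): first component is the antecedent ψ, second the consequent φ,
both given semantically as Boolean functions on worlds. -/
abbrev Cond (A : Type) := (World A → Bool) × (World A → Bool)

/-- `w` falsifies (φ|ψ) iff w ⊨ ψ ∧ ¬φ. -/
def falsifies {A : Type} (w : World A) (c : Cond A) : Prop :=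
  c.1 w = true ∧ c.2 w = false

/-- `w` verifies (φ|ψ) iff w ⊨ ψ ∧ φ. -/
def verifies {A : Type} (w : World A) (c : Cond A) : Prop :=
  c.1 w = true ∧ c.2 w = true

instance {A : Type} (w : World A) (c : Cond A) : Decidable (falsifies w c) := by
  unfold falsifies; infer_instance

instance {A : Type} (w : World A) (c : Cond A) : Decidable (verifies w c) := by
  unfold verifies; infer_instance

/-- Δ tolerates δ iff some world verifies δ and falsifies no member of Δ. -/
def tolerates {A : Type} [Fintype A] [DecidableEq A]
    (Δ : Finset (Cond A)) (c : Cond A) : Prop :=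
  ∃ w : World A, verifies w c ∧ ∀ d ∈ Δ, ¬ falsifies w d

instance {A : Type} [Fintype A] [DecidableEq A] (Δ : Finset (Cond A)) (c : Cond A) :
    Decidable (tolerates Δ c) := by
  unfold tolerates
  have : DecidablePred (fun w : World A => verifies w c ∧ ∀ d ∈ Δ, ¬ falsifies w d) :=
    fun _ => inferInstance
  infer_instance

/-- The Z-level of a conditional: Z(δ) = i iff δ ∈ Δ_i in the Z-partition,
where Δ_0 is the set of conditionals tolerated by Δ and the recursion continues on Δ \ Δ_0. -/
def zlevel {A : Type} [Fintype A] [DecidableEq A]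
    (Δ : Finset (Cond A)) (c : Cond A) : ℕ :=
  if tolerates Δ c then 0
  else
    if h : (Δ.filter (fun d => ¬ tolerates Δ d)).card < Δ.card then
      1 + zlevel (Δ.filter (fun d => ¬ tolerates Δ d)) c
    else 0
termination_by Δ.card
decreasing_by exact h

/-- The System Z ranking function: κ^Z(w) = max{Z(δ) : δ ∈ Δ falsified by w} + 1,
with max ∅ = -1 (so κ^Z(w) = 0 iff w falsifies no conditional of Δ). -/
def kappaZ {A : Type} [Fintype A] [DecidableEq A]
    (Δ : Finset (Cond A)) (w : World A) : ℕ :=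
  (Δ.filter (fun d => falsifies w d)).sup (fun d => zlevel Δ d + 1)

/-- The translation θ of an argumentation framework with attack relation `att`
into conditionals: for each argument a, the conditional (a | ⋀_{(b,a)∈R} ¬b). -/
def theta {A : Type} [Fintype A] [DecidableEq A] (att : A → A → Bool) : Finset (Cond A) :=
  Finset.univ.image (fun a : A =>
    ((fun w : World A => decide (∀ b, att b a = true → w b = false)),
     (fun w : World A => w a)))

/-- Ccs(a): the number of System-Z-rank-0 worlds satisfying a. -/
def Ccs {A : Type} [Fintype A] [DecidableEq A]
    (Δ : Finset (Cond A)) (a : A) : ℕ :=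
  (Finset.univ.filter (fun w : World A => kappaZ Δ w = 0 ∧ w a = true)).card

lemma kappaZ_eq_zero_iff {A : Type} [Fintype A] [DecidableEq A]
    (Δ : Finset (Cond A)) (w : World A) :
    kappaZ Δ w = 0 ↔ ∀ d ∈ Δ, ¬ falsifies w d := by
  unfold kappaZ
  constructor
  · intro h d hd hf
    have hle := Finset.le_sup (f := fun d => zlevel Δ d + 1)
      (Finset.mem_filter.2 ⟨hd, hf⟩)
    rw [show (Finset.filter (falsifies w) Δ) = Δ.filter (fun d => falsifies w d) from rfl, h] at hle
    simp at hle
  · intro h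
    have : Δ.filter (fun d => falsifies w d) = ∅ := by
      apply Finset.filter_eq_empty_iff.2
      intro d hd
      exact h d hd
    simp [this]

lemma rank0_iff {A : Type} [Fintype A] [DecidableEq A]
    (att : A → A → Bool) (w : World A) :
    kappaZ (theta att) w = 0 ↔
      ∀ x : A, ¬ ((∀ b, att b x = true → w b = false) ∧ w x = false) := by
  rw [kappaZ_eq_zero_iff]
  constructor
  · intro h x hx
    exact h _ (Finset.mem_image.2 ⟨x, Finset.mem_univ x, rfl⟩)
      ⟨by simpa using hx.1, by simpa using hx.2⟩
  · intro h d hd hf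
    obtain ⟨x, -, rfl⟩ := Finset.mem_image.1 hd
    exact h x ⟨by simpa using hf.1, by simpa using hf.2⟩

lemma ccs_eq {A : Type} [Fintype A] [DecidableEq A]
    (att : A → A → Bool) (att' : Option A → Option A → Bool)
    (h1 : ∀ x y : A, att' (some x) (some y) = att x y)
    (h2 : ∀ x : Option A, att' x none = false)
    (h3 : ∀ y : Option A, att' none y = false) (a : A) :
    Ccs (theta att') (some a) = Ccs (theta att) a := by
  classical
  unfold Ccs
  -- characterize rank-0 worlds of att'
  have key : ∀ w : World (Option A), kappaZ (theta att') w = 0 ↔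
      (w none = true ∧ kappaZ (theta att) (fun x => w (some x)) = 0) := by
    intro w
    rw [rank0_iff, rank0_iff]
    constructor
    · intro h
      constructor
      · by_contra hne
        exact h none ⟨fun b hb => by simp [h2] at hb, by
          cases hwn : w none
          · rfl
          · exact absurd hwn hne⟩
      · intro x hx
        apply h (some x)
        refine ⟨fun b hb => ?_, hx.2⟩
        cases b with
        | none => simp [h3] at hb
        | some b => exact hx.1 b (by rwa [h1] at hb)
    · rintro ⟨hn, h⟩ x hx
      cases x with
      | none => rw [hn] at hx; exact absurd hx.2 (by simp)
      | some x =>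
        apply h x
        refine ⟨fun b hb => hx.1 (some b) (by rwa [h1]), hx.2⟩
  apply Finset.card_bij' (fun w _ => (fun x => w (some x) : World A))
    (fun v _ => (fun o => Option.elim o true v : World (Option A)))
  · intro w hw
    simp only [Finset.mem_filter, Finset.mem_univ, true_and] at hw ⊢
    exact ⟨(key w).1 hw.1 |>.2, hw.2⟩
  · intro v hv
    simp only [Finset.mem_filter, Finset.mem_univ, true_and] at hv ⊢
    refine ⟨(key _).2 ⟨rfl, ?_⟩, hv.2⟩
    · convert hv.1 using 2; rfl
  · intro w hw
    simp only [Finset.mem_filter, Finset.mem_univ, true_and] at hw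
    have hn := ((key w).1 hw.1).1
    funext o
    cases o with
    | none => simpa using hn.symm
    | some x => rfl
  · intro v hv
    rfl

/-- Ccbs is unaffected by adding an isolated argument (`none`). -/
theorem ccbs_independence_isolated {A : Type} [Fintype A] [DecidableEq A]
    (att : A → A → Bool) (att' : Option A → Option A → Bool)
    (h1 : ∀ x y : A, att' (some x) (some y) = att x y)
    (h2 : ∀ x : Option A, att' x none = false)
    (h3 : ∀ y : Option A, att' none y = false) :
    ∀ a b : A, (Ccs (theta att) a ≥ Ccs (theta att) b ↔
      Ccs (theta att') (some a) ≥ Ccs (theta att') (some b)) := by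
  intro a b
  rw [ccs_eq att att' h1 h2 h3 a, ccs_eq att att' h1 h2 h3 b]
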